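/- Let $p \geq 2$ be real. Then for all real numbers $a, b$, we have $|b|^p - |a|^p \geq p|a|^{p-2} a (b-a) + 2^{1-p} |a-b|^p$ (with the convention $|a|^{p-2}a = 0$ when $a = 0$). -/

import Mathlib

open Real

/-- superadditivity of `x ^ q` on nonneg reals for `q ≥ 1`. -/
private lemma rpow_add_le' (x y q : ℝ) (hx : 0 ≤ x) (hy : 0 ≤ y) (hq : 1 ≤ q) :
    x ^ q + y ^ q ≤ (x + y) ^ q := by
  have h := NNReal.add_rpow_le_rpow_add (x.toNNReal) (y.toNNReal) hq
  have := NNReal.coe_le_coe.mpr h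
  push_cast [NNReal.coe_rpow, Real.coe_toNNReal _ hx, Real.coe_toNNReal _ hy] at this
  simpa using this

/-- power mean inequality for two points. -/
private lemma midpoint_rpow_le (x y q : ℝ) (hx : 0 ≤ x) (hy : 0 ≤ y) (hq : 1 ≤ q) :
    ((x + y) / 2) ^ q ≤ (x ^ q + y ^ q) / 2 := by
  have h := (convexOn_rpow hq).2 (Set.mem_Ici.mpr hx) (Set.mem_Ici.mpr hy)
    (by norm_num : (0:ℝ) ≤ 1/2) (by norm_num : (0:ℝ) ≤ 1/2) (by norm_num)
  simp only [smul_eq_mul] at h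
  calc ((x + y) / 2) ^ q = (1/2 * x + 1/2 * y) ^ q := by ring_nf
    _ ≤ 1/2 * x ^ q + 1/2 * y ^ q := h
    _ = (x ^ q + y ^ q) / 2 := by ring

/-- tangent line inequality for `t ^ q` on nonneg reals, `q ≥ 2`. -/
private lemma tangent_nonneg (s t q : ℝ) (hs : 0 ≤ s) (ht : 0 ≤ t) (hq : 2 ≤ q) :
    s ^ q + q * s ^ (q - 1) * (t - s) ≤ t ^ q := by
  have hq1 : (1:ℝ) ≤ q := by linarith
  rcases hs.eq_or_lt with rfl | h0
  · rw [Real.zero_rpow (ne_of_gt (by linarith : (0:ℝ) < q)),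
      Real.zero_rpow (ne_of_gt (by linarith : (0:ℝ) < q - 1))]
    simpa using Real.rpow_nonneg ht q
  · have hB := one_add_mul_self_le_rpow_one_add
      (s := (t - s) / s) (by rw [neg_le, ← sub_nonneg]; field_simp; linarith) hq1
    have h1 : 1 + (t - s) / s = t / s := by field_simp; ring
    rw [h1, Real.div_rpow ht h0.le] at hB
    have hsp : 0 < s ^ q := Real.rpow_pos_of_pos h0 q
    have hmul := mul_le_mul_of_nonneg_left hB hsp.le
    rw [mul_div_cancel₀ _ (ne_of_gt hsp)] at hmul
    calc s ^ q + q * s ^ (q - 1) * (t - s)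
        = s ^ q * (1 + q * ((t - s) / s)) := by
          rw [show q - 1 = q + -1 by ring, Real.rpow_add h0, Real.rpow_neg_one]
          field_simp
      _ ≤ t ^ q := hmul

/-- tangent line inequality for `|t| ^ q`. -/
private lemma tangent_abs (x y q : ℝ) (hq : 2 ≤ q) :
    |x| ^ q + q * |x| ^ (q - 2) * x * (y - x) ≤ |y| ^ q := by
  rcases eq_or_ne x 0 with rfl | hx
  · simp only [abs_zero, Real.zero_rpow (ne_of_gt (by linarith : (0:ℝ) < q)), mul_zero,
      zero_mul, zero_add, sub_zero]
    positivity
  · have hax : 0 < |x| := abs_pos.mpr hx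
    have hq0 : (0:ℝ) ≤ q := by linarith
    have h2 : |x| ^ (q - 2) * |x| = |x| ^ (q - 1) := by
      rw [show q - 1 = (q - 2) + 1 by ring, Real.rpow_add_one hax.ne']
    have h3 : |x| ^ (q - 2) * (x * x) = |x| ^ (q - 1) * |x| := by
      have hxx : x * x = |x| * |x| := by
        rcases abs_cases x with ⟨h, _⟩ | ⟨h, _⟩ <;> nlinarith
      rw [hxx, ← mul_assoc, h2]
    have h1 : |x| ^ (q - 2) * (x * y) ≤ |x| ^ (q - 2) * (|x| * |y|) := by
      apply mul_le_mul_of_nonneg_left _ (Real.rpow_nonneg (abs_nonneg x) _)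
      calc x * y ≤ |x * y| := le_abs_self _
        _ = |x| * |y| := abs_mul x y
    have key : q * |x| ^ (q - 2) * x * (y - x) ≤ q * |x| ^ (q - 1) * (|y| - |x|) := by
      have hm := mul_le_mul_of_nonneg_left h1 hq0
      calc q * |x| ^ (q - 2) * x * (y - x)
          = q * (|x| ^ (q - 2) * (x * y)) - q * (|x| ^ (q - 2) * (x * x)) := by ring
        _ ≤ q * (|x| ^ (q - 2) * (|x| * |y|)) - q * (|x| ^ (q - 2) * (x * x)) := by linarith
        _ = q * ((|x| ^ (q - 2) * |x|) * |y|) - q * (|x| ^ (q - 1) * |x|) := by rw [h3]; ring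
        _ = q * |x| ^ (q - 1) * (|y| - |x|) := by rw [h2]; ring
    have ht := tangent_nonneg |x| |y| q (abs_nonneg x) (abs_nonneg y) hq
    linarith

/-- `C ^ q = (C ^ 2) ^ (q / 2)` for `0 ≤ C`. -/
private lemma rpow_eq_sq_rpow_half (C q : ℝ) (hC : 0 ≤ C) : C ^ q = (C ^ 2) ^ (q / 2) := by
  rw [← Real.rpow_natCast C 2, ← Real.rpow_mul hC]
  rw [show (2:ℕ) * (q / 2) = q by push_cast; ring]

/-- scalar Clarkson inequality for `q ≥ 2`. -/
private lemma clarkson (a b q : ℝ) (hq : 2 ≤ q) :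
    |(a + b) / 2| ^ q + |(a - b) / 2| ^ q ≤ (|a| ^ q + |b| ^ q) / 2 := by
  set A := |(a + b) / 2| with hA
  set B := |(a - b) / 2| with hB
  have hA0 : 0 ≤ A := abs_nonneg _
  have hB0 : 0 ≤ B := abs_nonneg _
  have hq2 : (1:ℝ) ≤ q / 2 := by linarith
  have step1 : A ^ q + B ^ q ≤ (A ^ 2 + B ^ 2) ^ (q / 2) := by
    rw [rpow_eq_sq_rpow_half A q hA0, rpow_eq_sq_rpow_half B q hB0]
    exact rpow_add_le' _ _ _ (by positivity) (by positivity) hq2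
  have hAB : A ^ 2 + B ^ 2 = (a ^ 2 + b ^ 2) / 2 := by
    rw [hA, hB, sq_abs, sq_abs]; ring
  have step2 : ((a ^ 2 + b ^ 2) / 2) ^ (q / 2) ≤ ((a ^ 2) ^ (q / 2) + (b ^ 2) ^ (q / 2)) / 2 :=
    midpoint_rpow_le _ _ _ (by positivity) (by positivity) hq2
  have ea : (a ^ 2) ^ (q / 2) = |a| ^ q := by
    rw [← sq_abs a]; exact (rpow_eq_sq_rpow_half |a| q (abs_nonneg a)).symm
  have eb : (b ^ 2) ^ (q / 2) = |b| ^ q := by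
    rw [← sq_abs b]; exact (rpow_eq_sq_rpow_half |b| q (abs_nonneg b)).symm
  rw [hAB] at step1
  rw [ea, eb] at step2
  linarith

/-- Lindqvist's convexity inequality: for real `p ≥ 2` and all real `a b`,
`|b|^p - |a|^p ≥ p |a|^(p-2) a (b - a) + 2^(1-p) |a - b|^p`. -/
theorem lindqvist_inequality (p : ℝ) (hp : 2 ≤ p) (a b : ℝ) :
    |b| ^ p - |a| ^ p ≥
      p * |a| ^ (p - 2) * a * (b - a) + (2 : ℝ) ^ (1 - p) * |a - b| ^ p := by
  have h1 := tangent_abs a ((a + b) / 2) p hp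
  rw [show (a + b) / 2 - a = (b - a) / 2 by ring] at h1
  have h2 := clarkson a b p hp
  have h3 : |(a - b) / 2| ^ p = |a - b| ^ p / (2:ℝ) ^ p := by
    rw [abs_div, abs_two, Real.div_rpow (abs_nonneg _) (by norm_num)]
  have h4 : (2:ℝ) ^ (1 - p) = 2 / (2:ℝ) ^ p := by
    rw [Real.rpow_sub (by norm_num : (0:ℝ) < 2), Real.rpow_one]
  rw [h3] at h2
  rw [ge_iff_le, h4]
  have h2p : (0:ℝ) < (2:ℝ) ^ p := Real.rpow_pos_of_pos (by norm_num) p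
  have e5 : 2 / (2:ℝ) ^ p * |a - b| ^ p = 2 * (|a - b| ^ p / (2:ℝ) ^ p) := by ring
  rw [e5]
  linarith
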